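/- Slack identity for feasible LP solutions (Lemma EC on the dual LP): if nonnegative reals y = (y_{it}^k(q)), u = (u_{jt}^k(q)) and reals w = (w_t^k(q)) satisfy constraints (i)–(v) below, then for all i ∈ L, t,q ∈ {1,…,T} and k ∈ {1,…,K}: P(D^k ≥ t, D^{k−1}=q)·c_i − Σ_{ℓ=1}^{k−1} Σ_{s=1}^T Σ_{p=1}^T Σ_{j∈J} a_{ij}·P(D^k ≥ t, D^{k−1}=q | D^ℓ ≥ s, D^{ℓ−1}=p)·u_{js}^ℓ(p) − Σ_{s=1}^t Σ_{j∈J} a_{ij}·P(D^k ≥ t | D^k ≥ s, D^{k−1}=q)·u_{js}^k(q) = y_{it}^k(q), where any conditional probability given a null event is interpreted as 0 (the corresponding u-term then vanishes by (v) and (i)). -/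

import Mathlib

open MeasureTheory Finset

namespace DualLPAux

variable {Ω : Type*} [MeasurableSpace Ω]

def ev (D0 K : ℕ) (v : Fin K → ℕ) : ℕ → ℕ :=
  fun n => if h : 1 ≤ n ∧ n ≤ K then v ⟨n - 1, by omega⟩ else D0

lemma ev_zero (D0 K : ℕ) (v : Fin K → ℕ) : ev D0 K v 0 = D0 := by simp [ev]

lemma ev_pos (D0 K : ℕ) (v : Fin K → ℕ) (n : ℕ) (h1 : 1 ≤ n) (h2 : n ≤ K) :
    ev D0 K v n = v ⟨n - 1, by omega⟩ := by
  simp [ev, h1, h2]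

noncomputable def rr (Pr : Measure Ω) (D : ℕ → Ω → ℕ) (m : ℕ) (d : ℕ → ℕ) : ℝ :=
  (Pr {ω | D m ω = d m ∧ D (m - 1) ω = d (m - 1)}).toReal /
    (Pr {ω | D (m - 1) ω = d (m - 1)}).toReal

lemma rr_congr {Pr : Measure Ω} {D : ℕ → Ω → ℕ} {m : ℕ} {d d' : ℕ → ℕ}
    (h1 : d m = d' m) (h2 : d (m - 1) = d' (m - 1)) :
    rr Pr D m d = rr Pr D m d' := by rw [rr, rr, h1, h2]

def sp (k K : ℕ) (v w : Fin K → ℕ) : Fin K → ℕ := fun i => if (i : ℕ) + 3 ≤ k then v i else w i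

lemma sp_sp (k K : ℕ) (v w : Fin K → ℕ) : sp k K (sp k K v w) (sp k K w v) = v := by
  funext i
  by_cases h : (i : ℕ) + 3 ≤ k <;> simp [sp, h]

lemma ev_sp_low (D0 K k : ℕ) (v w : Fin K → ℕ) (m : ℕ) (hm : m + 2 ≤ k) :
    ev D0 K (sp k K v w) m = ev D0 K v m := by
  by_cases h : 1 ≤ m ∧ m ≤ K
  · rw [ev_pos _ _ _ _ h.1 h.2, ev_pos _ _ _ _ h.1 h.2]
    have hc : (m - 1) + 3 ≤ k := by omega
    simp [sp, hc]
  · simp [ev, h]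

lemma ev_sp_high (D0 K k : ℕ) (v w : Fin K → ℕ) (m : ℕ) (h1 : 1 ≤ m) (hm : k ≤ m + 1) :
    ev D0 K (sp k K v w) m = ev D0 K w m := by
  by_cases h : 1 ≤ m ∧ m ≤ K
  · rw [ev_pos _ _ _ _ h.1 h.2, ev_pos _ _ _ _ h.1 h.2]
    have hc : ¬ ((m - 1) + 3 ≤ k) := by omega
    simp [sp, hc]
  · simp [ev, h]

/-- `ev` of a splice agrees with `v` on coordinates `≤ k-1` provided both have coordinate
`k-1` equal to `q`. -/
lemma ev_sp_le (D0 K k q : ℕ) (hk : 2 ≤ k) (v w : Fin K → ℕ)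
    (hv : ev D0 K v (k - 1) = q) (hw : ev D0 K w (k - 1) = q)
    (m : ℕ) (hm : m ≤ k - 1) :
    ev D0 K (sp k K v w) m = ev D0 K v m := by
  rcases Nat.lt_or_ge m (k - 1) with h | h
  · exact ev_sp_low D0 K k v w m (by omega)
  · have hmk : m = k - 1 := by omega
    subst hmk
    rw [ev_sp_high D0 K k v w _ (by omega) (by omega), hw, hv]


lemma cyl (Pr : Measure Ω) [IsProbabilityMeasure Pr] (K T D0 : ℕ)
    (hD0 : D0 ∈ Finset.Icc 1 T)
    (D : ℕ → Ω → ℕ) (hDmeas : ∀ k, Measurable (D k))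
    (hD0as : ∀ᵐ ω ∂Pr, D 0 ω = D0)
    (hDrange : ∀ k ∈ Finset.Icc 1 K, ∀ᵐ ω ∂Pr, D k ω ∈ Finset.Icc 1 T)
    (hMarkov : ∀ d : ℕ → ℕ, d 0 = D0 → (∀ k ∈ Finset.Icc 1 K, d k ∈ Finset.Icc 1 T) →
      (Pr {ω | ∀ k ∈ Finset.Icc 1 K, D k ω = d k}).toReal =
        ∏ k ∈ Finset.Icc 1 K,
          (Pr {ω | D k ω = d k ∧ D (k - 1) ω = d (k - 1)}).toReal /
            (Pr {ω | D (k - 1) ω = d (k - 1)}).toReal)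
    (φ : (ℕ → ℕ) → Prop) [DecidablePred φ]
    (hdep : ∀ x y : ℕ → ℕ, (∀ m, m ≤ K → x m = y m) → φ x → φ y) :
    (Pr {ω | φ (fun m => D m ω)}).toReal =
      ∑ v ∈ (Fintype.piFinset fun _ : Fin K => Finset.Icc 1 T).filter
          (fun v => φ (ev D0 K v)),
        ∏ m ∈ Finset.Icc 1 K, rr Pr D m (ev D0 K v) := by
  set box := (Fintype.piFinset fun _ : Fin K => Finset.Icc 1 T).filter
    (fun v => φ (ev D0 K v)) with hbox
  set G : Set Ω := {ω | D 0 ω = D0 ∧ ∀ m ∈ Finset.Icc 1 K, D m ω ∈ Finset.Icc 1 T} with hGdef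
  have hGae : ∀ᵐ ω ∂Pr, ω ∈ G := by
    have h2 : ∀ᵐ ω ∂Pr, ∀ m ∈ Finset.Icc 1 K, D m ω ∈ Finset.Icc 1 T :=
      (Finset.eventually_all (Finset.Icc 1 K)).2 hDrange
    filter_upwards [hD0as, h2] with ω h1 h2
    exact ⟨h1, h2⟩
  have hGc : Pr Gᶜ = 0 := ae_iff.1 hGae
  have hAtomMeas : ∀ v : Fin K → ℕ,
      MeasurableSet {ω | ∀ m ∈ Finset.Icc 1 K, D m ω = ev D0 K v m} := by
    intro v
    have he : {ω | ∀ m ∈ Finset.Icc 1 K, D m ω = ev D0 K v m} =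
        ⋂ m ∈ (Finset.Icc 1 K : Finset ℕ), D m ⁻¹' {ev D0 K v m} := by
      ext ω; simp [Set.mem_iInter]
    rw [he]
    exact MeasurableSet.biInter (Finset.Icc 1 K).countable_toSet
      (fun m _ => hDmeas m (Set.to_countable _).measurableSet)
  -- agreement of ev with actual trajectory on G
  have agree : ∀ ω, ω ∈ G → ∀ m, m ≤ K →
      ev D0 K (fun i : Fin K => D ((i : ℕ) + 1) ω) m = D m ω := by
    intro ω hω m hm
    rcases Nat.eq_zero_or_pos m with h0 | h1
    · subst h0; simp [ev, hω.1.symm]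
    · rw [ev_pos _ _ _ _ h1 hm]
      show D ((m - 1) + 1) ω = D m ω
      congr 1
      omega
  have hunion : {ω | φ (fun m => D m ω)} ∩ G =
      (⋃ v ∈ box, {ω | ∀ m ∈ Finset.Icc 1 K, D m ω = ev D0 K v m}) ∩ G := by
    ext ω
    simp only [Set.mem_inter_iff, Set.mem_setOf_eq, Set.mem_iUnion, hbox,
      Finset.mem_filter, Fintype.mem_piFinset, exists_prop]
    constructor
    · rintro ⟨hφ, hG⟩
      refine ⟨⟨fun i : Fin K => D ((i : ℕ) + 1) ω, ⟨fun i => ?_, ?_⟩, ?_⟩, hG⟩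
      · exact hG.2 ((i : ℕ) + 1) (by simp [Finset.mem_Icc] <;> omega)
      · exact hdep _ _ (fun m hm => (agree ω hG m hm).symm) hφ
      · intro m hm
        simp only [Finset.mem_Icc] at hm
        exact (agree ω hG m hm.2).symm
    · rintro ⟨⟨v, ⟨hvbox, hφv⟩, hvatom⟩, hG⟩
      refine ⟨hdep _ _ (fun m hm => ?_) hφv, hG⟩
      rcases Nat.eq_zero_or_pos m with h0 | h1
      · subst h0; simp [ev, hG.1]
      · exact (hvatom m (by simp [Finset.mem_Icc]; omega)).symm
  have hdisj : (box : Set (Fin K → ℕ)).PairwiseDisjoint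
      (fun v => {ω | ∀ m ∈ Finset.Icc 1 K, D m ω = ev D0 K v m}) := by
    intro v hv w hw hvw
    refine Set.disjoint_left.2 fun ω h1 h2 => hvw ?_
    funext i
    have hiK : (i : ℕ) + 1 ∈ Finset.Icc 1 K := by simp [Finset.mem_Icc] <;> omega
    have e1 := h1 ((i : ℕ) + 1) hiK
    have e2 := h2 ((i : ℕ) + 1) hiK
    rw [ev_pos _ _ _ _ (by omega) (by omega)] at e1 e2
    have : v ⟨(i : ℕ) + 1 - 1, by omega⟩ = w ⟨(i : ℕ) + 1 - 1, by omega⟩ := by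
      rw [← e1, ← e2]
    simpa using this
  calc (Pr {ω | φ (fun m => D m ω)}).toReal
      = (Pr ({ω | φ (fun m => D m ω)} ∩ G)).toReal := by rw [measure_inter_conull hGc]
    _ = (Pr ((⋃ v ∈ box, {ω | ∀ m ∈ Finset.Icc 1 K, D m ω = ev D0 K v m}) ∩ G)).toReal := by
        rw [hunion]
    _ = (Pr (⋃ v ∈ box, {ω | ∀ m ∈ Finset.Icc 1 K, D m ω = ev D0 K v m})).toReal := by
        rw [measure_inter_conull hGc]
    _ = (∑ v ∈ box, Pr {ω | ∀ m ∈ Finset.Icc 1 K, D m ω = ev D0 K v m}).toReal := by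
        rw [measure_biUnion_finset hdisj (fun v _ => hAtomMeas v)]
    _ = ∑ v ∈ box, (Pr {ω | ∀ m ∈ Finset.Icc 1 K, D m ω = ev D0 K v m}).toReal := by
        rw [ENNReal.toReal_sum (fun v _ => measure_ne_top _ _)]
    _ = ∑ v ∈ box, ∏ m ∈ Finset.Icc 1 K, rr Pr D m (ev D0 K v) := by
        refine Finset.sum_congr rfl fun v hv => ?_
        simp only [hbox, Finset.mem_filter, Fintype.mem_piFinset] at hv
        rw [hMarkov (ev D0 K v) (ev_zero D0 K v) (fun m hm => ?_)]
        · rfl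
        · simp only [Finset.mem_Icc] at hm
          rw [ev_pos _ _ _ _ hm.1 hm.2]
          exact hv.1 _


lemma markov_fact (Pr : Measure Ω) [IsProbabilityMeasure Pr] (K T D0 : ℕ)
    (hD0 : D0 ∈ Finset.Icc 1 T)
    (D : ℕ → Ω → ℕ) (hDmeas : ∀ k, Measurable (D k))
    (hD0as : ∀ᵐ ω ∂Pr, D 0 ω = D0)
    (hDrange : ∀ k ∈ Finset.Icc 1 K, ∀ᵐ ω ∂Pr, D k ω ∈ Finset.Icc 1 T)
    (hMarkov : ∀ d : ℕ → ℕ, d 0 = D0 → (∀ k ∈ Finset.Icc 1 K, d k ∈ Finset.Icc 1 T) →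
      (Pr {ω | ∀ k ∈ Finset.Icc 1 K, D k ω = d k}).toReal =
        ∏ k ∈ Finset.Icc 1 K,
          (Pr {ω | D k ω = d k ∧ D (k - 1) ω = d (k - 1)}).toReal /
            (Pr {ω | D (k - 1) ω = d (k - 1)}).toReal)
    (k l t s q p : ℕ) (hk2 : 2 ≤ k) (hkK : k ≤ K) (hlk : l ≤ k - 1) :
    (Pr {ω | (t ≤ D k ω ∧ D (k - 1) ω = q) ∧ s ≤ D l ω ∧ D (l - 1) ω = p}).toReal *
      (Pr {ω | D (k - 1) ω = q}).toReal =
    (Pr {ω | t ≤ D k ω ∧ D (k - 1) ω = q}).toReal *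
      (Pr {ω | D (k - 1) ω = q ∧ s ≤ D l ω ∧ D (l - 1) ω = p}).toReal := by
  have e1 : (Pr {ω | (t ≤ D k ω ∧ D (k - 1) ω = q) ∧ s ≤ D l ω ∧ D (l - 1) ω = p}).toReal
      = ∑ v ∈ (Fintype.piFinset fun _ : Fin K => Finset.Icc 1 T).filter
          (fun v => (t ≤ ev D0 K v k ∧ ev D0 K v (k - 1) = q) ∧
            s ≤ ev D0 K v l ∧ ev D0 K v (l - 1) = p),
        ∏ m ∈ Finset.Icc 1 K, rr Pr D m (ev D0 K v) :=
    cyl Pr K T D0 hD0 D hDmeas hD0as hDrange hMarkov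
      (fun d => (t ≤ d k ∧ d (k - 1) = q) ∧ s ≤ d l ∧ d (l - 1) = p)
      (fun x y h hx => by
        rwa [h k hkK, h (k - 1) (by omega), h l (by omega), h (l - 1) (by omega)] at hx)
  have e2 : (Pr {ω | D (k - 1) ω = q}).toReal
      = ∑ v ∈ (Fintype.piFinset fun _ : Fin K => Finset.Icc 1 T).filter
          (fun v => ev D0 K v (k - 1) = q),
        ∏ m ∈ Finset.Icc 1 K, rr Pr D m (ev D0 K v) :=
    cyl Pr K T D0 hD0 D hDmeas hD0as hDrange hMarkov
      (fun d => d (k - 1) = q)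
      (fun x y h hx => by rwa [h (k - 1) (by omega)] at hx)
  have e3 : (Pr {ω | t ≤ D k ω ∧ D (k - 1) ω = q}).toReal
      = ∑ v ∈ (Fintype.piFinset fun _ : Fin K => Finset.Icc 1 T).filter
          (fun v => t ≤ ev D0 K v k ∧ ev D0 K v (k - 1) = q),
        ∏ m ∈ Finset.Icc 1 K, rr Pr D m (ev D0 K v) :=
    cyl Pr K T D0 hD0 D hDmeas hD0as hDrange hMarkov
      (fun d => t ≤ d k ∧ d (k - 1) = q)
      (fun x y h hx => by rwa [h k hkK, h (k - 1) (by omega)] at hx)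
  have e4 : (Pr {ω | D (k - 1) ω = q ∧ s ≤ D l ω ∧ D (l - 1) ω = p}).toReal
      = ∑ v ∈ (Fintype.piFinset fun _ : Fin K => Finset.Icc 1 T).filter
          (fun v => ev D0 K v (k - 1) = q ∧ s ≤ ev D0 K v l ∧ ev D0 K v (l - 1) = p),
        ∏ m ∈ Finset.Icc 1 K, rr Pr D m (ev D0 K v) :=
    cyl Pr K T D0 hD0 D hDmeas hD0as hDrange hMarkov
      (fun d => d (k - 1) = q ∧ s ≤ d l ∧ d (l - 1) = p)
      (fun x y h hx => by
        rwa [h (k - 1) (by omega), h l (by omega), h (l - 1) (by omega)] at hx)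
  rw [e1, e2, e3, e4]
  -- split the product at the cut k
  set P : (Fin K → ℕ) → ℝ := fun v => ∏ m ∈ Finset.Icc 1 (k - 1), rr Pr D m (ev D0 K v)
    with hP
  set F : (Fin K → ℕ) → ℝ := fun v => ∏ m ∈ Finset.Icc k K, rr Pr D m (ev D0 K v) with hF
  have hPF : ∀ v : Fin K → ℕ,
      ∏ m ∈ Finset.Icc 1 K, rr Pr D m (ev D0 K v) = P v * F v := by
    intro v
    have h1 : Finset.Icc 1 K = Finset.Ioc 0 K := Finset.Icc_add_one_left_eq_Ioc 0 K
    have h2 : Finset.Icc 1 (k - 1) = Finset.Ioc 0 (k - 1) := Finset.Icc_add_one_left_eq_Ioc 0 (k - 1)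
    have h3 : Finset.Icc k K = Finset.Ioc (k - 1) K := by
      rw [← Finset.Icc_add_one_left_eq_Ioc (k - 1) K]
      congr 1
      omega
    rw [hP, hF, h1, h2, h3]
    exact (Finset.prod_Ioc_consecutive _ (Nat.zero_le _) (by omega)).symm
  simp only [hPF]
  have hPcongr : ∀ v w : Fin K → ℕ,
      (∀ m, m ≤ k - 1 → ev D0 K v m = ev D0 K w m) → P v = P w := by
    intro v w h
    refine Finset.prod_congr rfl fun m hm => ?_
    simp only [Finset.mem_Icc] at hm
    exact rr_congr (h m hm.2) (h (m - 1) (by omega))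
  have hFcongr : ∀ v w : Fin K → ℕ,
      (∀ m, 1 ≤ m → k - 1 ≤ m → ev D0 K v m = ev D0 K w m) → F v = F w := by
    intro v w h
    refine Finset.prod_congr rfl fun m hm => ?_
    simp only [Finset.mem_Icc] at hm
    exact rr_congr (h m (by omega) (by omega)) (h (m - 1) (by omega) (by omega))
  rw [Finset.sum_mul_sum, Finset.sum_mul_sum, ← Finset.sum_product', ← Finset.sum_product']
  refine Finset.sum_nbij' (fun x => (sp k K x.2 x.1, sp k K x.1 x.2))
    (fun x => (sp k K x.2 x.1, sp k K x.1 x.2)) ?_ ?_ ?_ ?_ ?_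
  · rintro ⟨v, w⟩ hvw
    simp only [Finset.mem_product, Finset.mem_filter, Fintype.mem_piFinset] at hvw ⊢
    obtain ⟨⟨hvbox, ⟨hχv, hmidv⟩, hψv⟩, hwbox, hmidw⟩ := hvw
    have hspbox1 : ∀ i, sp k K w v i ∈ Finset.Icc 1 T := by
      intro i; by_cases h : (i : ℕ) + 3 ≤ k <;> simp only [sp, h, if_true, if_false] <;>
        [exact hwbox i; exact hvbox i]
    have hspbox2 : ∀ i, sp k K v w i ∈ Finset.Icc 1 T := by
      intro i; by_cases h : (i : ℕ) + 3 ≤ k <;> simp only [sp, h, if_true, if_false] <;>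
        [exact hvbox i; exact hwbox i]
    refine ⟨⟨hspbox1, ?_, ?_⟩, hspbox2, ?_, ?_, ?_⟩
    · rw [ev_sp_high D0 K k w v k (by omega) (by omega)]; exact hχv
    · rw [ev_sp_high D0 K k w v (k - 1) (by omega) (by omega)]; exact hmidv
    · rw [ev_sp_high D0 K k v w (k - 1) (by omega) (by omega)]; exact hmidw
    · rw [ev_sp_le D0 K k q hk2 v w hmidv hmidw l (by omega)]; exact hψv.1
    · rw [ev_sp_le D0 K k q hk2 v w hmidv hmidw (l - 1) (by omega)]; exact hψv.2
  · rintro ⟨v, w⟩ hvw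
    simp only [Finset.mem_product, Finset.mem_filter, Fintype.mem_piFinset] at hvw ⊢
    obtain ⟨⟨hvbox, hχv, hmidv⟩, hwbox, hmidw, hψw⟩ := hvw
    have hspbox1 : ∀ i, sp k K w v i ∈ Finset.Icc 1 T := by
      intro i; by_cases h : (i : ℕ) + 3 ≤ k <;> simp only [sp, h, if_true, if_false] <;>
        [exact hwbox i; exact hvbox i]
    have hspbox2 : ∀ i, sp k K v w i ∈ Finset.Icc 1 T := by
      intro i; by_cases h : (i : ℕ) + 3 ≤ k <;> simp only [sp, h, if_true, if_false] <;>
        [exact hvbox i; exact hwbox i]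
    refine ⟨⟨hspbox1, ⟨?_, ?_⟩, ?_, ?_⟩, hspbox2, ?_⟩
    · rw [ev_sp_high D0 K k w v k (by omega) (by omega)]; exact hχv
    · rw [ev_sp_high D0 K k w v (k - 1) (by omega) (by omega)]; exact hmidv
    · rw [ev_sp_le D0 K k q hk2 w v hmidw hmidv l (by omega)]; exact hψw.1
    · rw [ev_sp_le D0 K k q hk2 w v hmidw hmidv (l - 1) (by omega)]; exact hψw.2
    · rw [ev_sp_high D0 K k v w (k - 1) (by omega) (by omega)]; exact hmidw
  · rintro ⟨v, w⟩ _
    simp only [Prod.mk.injEq]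
    exact ⟨sp_sp k K v w, sp_sp k K w v⟩
  · rintro ⟨v, w⟩ _
    simp only [Prod.mk.injEq]
    exact ⟨sp_sp k K v w, sp_sp k K w v⟩
  · rintro ⟨v, w⟩ hvw
    simp only [Finset.mem_product, Finset.mem_filter, Fintype.mem_piFinset] at hvw
    obtain ⟨⟨hvbox, ⟨hχv, hmidv⟩, hψv⟩, hwbox, hmidw⟩ := hvw
    have h1 : P (sp k K w v) = P w :=
      hPcongr _ _ (fun m hm => ev_sp_le D0 K k q hk2 w v hmidw hmidv m hm)
    have h2 : F (sp k K w v) = F v :=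
      hFcongr _ _ (fun m h1m h2m => ev_sp_high D0 K k w v m h1m (by omega))
    have h3 : P (sp k K v w) = P v :=
      hPcongr _ _ (fun m hm => ev_sp_le D0 K k q hk2 v w hmidv hmidw m hm)
    have h4 : F (sp k K v w) = F w :=
      hFcongr _ _ (fun m h1m h2m => ev_sp_high D0 K k v w m h1m (by omega))
    simp only [h1, h2, h3, h4]
    ring


end DualLPAux
/-- Slack identity for feasible solutions of the dual linear program: if nonnegative `y`, `u`
and reals `w` satisfy constraints (i)–(v), then for all `i ∈ L`, `t, q ∈ {1,…,T}` and
`k ∈ {1,…,K}`, the conditional-expected remaining capacity identity holds, where conditional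
probabilities given null events are interpreted as `0`. -/
theorem dual_lp_slack_identity
    {Ω : Type*} [MeasurableSpace Ω] (Pr : Measure Ω) [IsProbabilityMeasure Pr]
    (K T : ℕ) (hK : 1 ≤ K) (hT : 1 ≤ T)
    (ε : ℝ) (hε : 0 < ε)
    (D0 : ℕ) (hD0 : D0 ∈ Finset.Icc 1 T)
    (D : ℕ → Ω → ℕ) (hDmeas : ∀ k, Measurable (D k))
    (hD0as : ∀ᵐ ω ∂Pr, D 0 ω = D0)
    (hDrange : ∀ k ∈ Finset.Icc 1 K, ∀ᵐ ω ∂Pr, D k ω ∈ Finset.Icc 1 T)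
    (hMarkov : ∀ d : ℕ → ℕ, d 0 = D0 → (∀ k ∈ Finset.Icc 1 K, d k ∈ Finset.Icc 1 T) →
      (Pr {ω | ∀ k ∈ Finset.Icc 1 K, D k ω = d k}).toReal =
        ∏ k ∈ Finset.Icc 1 K,
          (Pr {ω | D k ω = d k ∧ D (k - 1) ω = d (k - 1)}).toReal /
            (Pr {ω | D (k - 1) ω = d (k - 1)}).toReal)
    (hLB : ∀ k < K, ∀ p ∈ Finset.Icc 1 T, ∀ q ∈ Finset.Icc 1 T,
      0 < Pr {ω | D k ω = q} →
      ε ≤ (Pr {ω | D (k + 1) ω = p ∧ D k ω = q}).toReal / (Pr {ω | D k ω = q}).toReal)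
    (θ : ℕ → ℕ → ℕ → ℝ)
    (hθ : ∀ k ∈ Finset.Icc 1 K, ∀ t ∈ Finset.Icc 1 T, ∀ q ∈ Finset.Icc 1 T,
      θ k t q = (Pr {ω | t + 1 ≤ D k ω ∧ D (k - 1) ω = q}).toReal /
        (Pr {ω | t ≤ D k ω ∧ D (k - 1) ω = q}).toReal)
    (L J : Type*) [Fintype L] [Nonempty L] [Fintype J] [Nonempty J]
    (c : L → ℕ) (hc : ∀ i, 1 ≤ c i)
    (a : L → J → ℕ) (ha : ∀ i j, a i j ≤ 1)
    (lam : J → ℕ → ℕ → ℝ)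
    (hlam0 : ∀ j k t, 0 ≤ lam j k t)
    (hlam1 : ∀ k ∈ Finset.Icc 1 K, ∀ t ∈ Finset.Icc 1 T, ∑ j, lam j k t = 1)
    (y : L → ℕ → ℕ → ℕ → ℝ) (u : J → ℕ → ℕ → ℕ → ℝ) (w : ℕ → ℕ → ℕ → ℝ)
    (hy0 : ∀ i k t q, 0 ≤ y i k t q) (hu0 : ∀ j k t q, 0 ≤ u j k t q)
    (hw1 : ∀ q ∈ Finset.Icc 1 T, w 1 1 q = if D0 = q then (1 : ℝ) else 0)
    (hw2 : ∀ k ∈ Finset.Icc 1 K, ∀ t ∈ Finset.Icc 2 T, ∀ q ∈ Finset.Icc 1 T,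
      w k t q = θ k (t - 1) q * w k (t - 1) q)
    (hw3 : ∀ k ∈ Finset.Icc 2 K, ∀ q ∈ Finset.Icc 1 T,
      w k 1 q = ∑ p ∈ Finset.Icc 1 T, (1 - θ (k - 1) q p) * w (k - 1) q p)
    (hyu2 : ∀ i : L, ∀ k ∈ Finset.Icc 1 K, ∀ t ∈ Finset.Icc 2 T, ∀ q ∈ Finset.Icc 1 T,
      y i k t q + ∑ j, (a i j : ℝ) * u j k t q = θ k (t - 1) q * y i k (t - 1) q)
    (hyu3 : ∀ i : L, ∀ k ∈ Finset.Icc 2 K, ∀ q ∈ Finset.Icc 1 T,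
      y i k 1 q + ∑ j, (a i j : ℝ) * u j k 1 q =
        ∑ p ∈ Finset.Icc 1 T, (1 - θ (k - 1) q p) * y i (k - 1) q p)
    (hyu4 : ∀ i : L, ∀ q ∈ Finset.Icc 1 T,
      y i 1 1 q + ∑ j, (a i j : ℝ) * u j 1 1 q =
        (if D0 = q then (1 : ℝ) else 0) * (c i : ℝ))
    (hu5 : ∀ j : J, ∀ k ∈ Finset.Icc 1 K, ∀ t ∈ Finset.Icc 1 T, ∀ q ∈ Finset.Icc 1 T,
      u j k t q ≤ lam j k t * w k t q) :
    ∀ i : L, ∀ k ∈ Finset.Icc 1 K, ∀ t ∈ Finset.Icc 1 T, ∀ q ∈ Finset.Icc 1 T,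
      (Pr {ω | t ≤ D k ω ∧ D (k - 1) ω = q}).toReal * (c i : ℝ) -
        (∑ l ∈ Finset.Icc 1 (k - 1), ∑ s ∈ Finset.Icc 1 T, ∑ p ∈ Finset.Icc 1 T, ∑ j,
          (a i j : ℝ) *
            ((Pr {ω | (t ≤ D k ω ∧ D (k - 1) ω = q) ∧ s ≤ D l ω ∧ D (l - 1) ω = p}).toReal /
              (Pr {ω | s ≤ D l ω ∧ D (l - 1) ω = p}).toReal) * u j l s p) -
        (∑ s ∈ Finset.Icc 1 t, ∑ j,
          (a i j : ℝ) *
            ((Pr {ω | t ≤ D k ω ∧ s ≤ D k ω ∧ D (k - 1) ω = q}).toReal /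
              (Pr {ω | s ≤ D k ω ∧ D (k - 1) ω = q}).toReal) * u j k s q) =
      y i k t q := by
  -- generic measure helpers
  have hPle : ∀ A B : Set Ω, A ⊆ B → (Pr A).toReal ≤ (Pr B).toReal :=
    fun A B h => ENNReal.toReal_mono (measure_ne_top _ _) (measure_mono h)
  have hPnn : ∀ A : Set Ω, 0 ≤ (Pr A).toReal := fun A => ENNReal.toReal_nonneg
  have hPzero : ∀ A B : Set Ω, A ⊆ B → (Pr B).toReal = 0 → (Pr A).toReal = 0 :=
    fun A B h hB => le_antisymm (hB ▸ hPle A B h) (hPnn A)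
  have haer : ∀ m, m ≤ K → ∀ᵐ ω ∂Pr, D m ω ∈ Finset.Icc 1 T := by
    intro m hm
    rcases Nat.eq_zero_or_pos m with h0 | h1
    · subst h0
      filter_upwards [hD0as] with ω h
      rw [h]; exact hD0
    · exact hDrange m (by simp [Finset.mem_Icc]; omega)
  have hae1 : ∀ k, 1 ≤ k → k ≤ K → ∀ᵐ ω ∂Pr, 1 ≤ D k ω := by
    intro k h1 h2
    filter_upwards [hDrange k (by simp [Finset.mem_Icc]; omega)] with ω h
    simp only [Finset.mem_Icc] at h
    exact h.1
  -- θ recursion for survival probabilities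
  have hθS : ∀ k t q, 1 ≤ k → k ≤ K → 1 ≤ t → t ≤ T → 1 ≤ q → q ≤ T →
      (Pr {ω | t + 1 ≤ D k ω ∧ D (k - 1) ω = q}).toReal =
        θ k t q * (Pr {ω | t ≤ D k ω ∧ D (k - 1) ω = q}).toReal := by
    intro k t q hk1 hkK ht1 htT hq1 hqT
    have hθ' := hθ k (by simp [Finset.mem_Icc]; omega) t (by simp [Finset.mem_Icc]; omega)
      q (by simp [Finset.mem_Icc]; omega)
    by_cases h0 : (Pr {ω | t ≤ D k ω ∧ D (k - 1) ω = q}).toReal = 0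
    · rw [h0, mul_zero]
      refine hPzero _ _ ?_ h0
      rintro ω ⟨h1, h2⟩
      exact ⟨by omega, h2⟩
    · rw [hθ', div_mul_cancel₀ _ h0]
  -- dropping an a.s. true conjunct `1 ≤ D k`
  have hS1 : ∀ k q, 1 ≤ k → k ≤ K →
      (Pr {ω | 1 ≤ D k ω ∧ D (k - 1) ω = q}).toReal = (Pr {ω | D (k - 1) ω = q}).toReal := by
    intro k q hk1 hkK
    refine congrArg ENNReal.toReal (measure_congr ?_)
    filter_upwards [hae1 k hk1 hkK] with ω h1
    exact eq_iff_iff.2 ⟨fun h => h.2, fun h => ⟨h1, h⟩⟩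
  have hC1 : ∀ k q l s p, 1 ≤ k → k ≤ K →
      (Pr {ω | (1 ≤ D k ω ∧ D (k - 1) ω = q) ∧ s ≤ D l ω ∧ D (l - 1) ω = p}).toReal =
        (Pr {ω | D (k - 1) ω = q ∧ s ≤ D l ω ∧ D (l - 1) ω = p}).toReal := by
    intro k q l s p hk1 hkK
    refine congrArg ENNReal.toReal (measure_congr ?_)
    filter_upwards [hae1 k hk1 hkK] with ω h1
    exact eq_iff_iff.2 ⟨fun h => ⟨h.1.2, h.2⟩, fun h => ⟨⟨h1, h.1⟩, h.2⟩⟩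
  have hmA : ∀ (l s p : ℕ), MeasurableSet {ω | s ≤ D l ω ∧ D (l - 1) ω = p} := by
    intro l s p
    exact (hDmeas l (Set.to_countable {x | s ≤ x}).measurableSet).inter
      (hDmeas (l - 1) (Set.to_countable {x | x = p}).measurableSet)
  -- splitting an event over the value of the previous coordinate
  have hsplitB : ∀ (m q : ℕ) (B : Set Ω), MeasurableSet B → 1 ≤ m → m ≤ K →
      (Pr ({ω | D m ω = q} ∩ B)).toReal =
        ∑ p' ∈ Finset.Icc 1 T, (Pr ({ω | D m ω = q ∧ D (m - 1) ω = p'} ∩ B)).toReal := by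
    intro m q B hB h1m hmK
    have haeG : ∀ᵐ ω ∂Pr, D (m - 1) ω ∈ Finset.Icc 1 T := haer (m - 1) (by omega)
    have hGc : Pr {ω | D (m - 1) ω ∈ Finset.Icc 1 T}ᶜ = 0 := ae_iff.1 haeG
    have hmeasQ : ∀ p' : ℕ, MeasurableSet ({ω | D m ω = q ∧ D (m - 1) ω = p'} ∩ B) := fun p' =>
      ((hDmeas m (Set.to_countable {x | x = q}).measurableSet).inter
        (hDmeas (m - 1) (Set.to_countable {x | x = p'}).measurableSet)).inter hB
    have hun : ({ω | D m ω = q} ∩ B) ∩ {ω | D (m - 1) ω ∈ Finset.Icc 1 T} =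
        (⋃ p' ∈ Finset.Icc 1 T, {ω | D m ω = q ∧ D (m - 1) ω = p'} ∩ B) ∩
          {ω | D (m - 1) ω ∈ Finset.Icc 1 T} := by
      ext ω
      simp only [Set.mem_inter_iff, Set.mem_setOf_eq, Set.mem_iUnion, exists_prop]
      constructor
      · rintro ⟨⟨hq, hBω⟩, hG⟩
        exact ⟨⟨D (m - 1) ω, hG, ⟨hq, rfl⟩, hBω⟩, hG⟩
      · rintro ⟨⟨p', _, ⟨hq, _⟩, hBω⟩, hG⟩
        exact ⟨⟨hq, hBω⟩, hG⟩
    have hdisj : ((Finset.Icc 1 T : Finset ℕ) : Set ℕ).PairwiseDisjoint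
        (fun p' => {ω | D m ω = q ∧ D (m - 1) ω = p'} ∩ B) := by
      intro p1 _ p2 _ hne
      refine Set.disjoint_left.2 ?_
      rintro ω ⟨⟨_, e1⟩, _⟩ ⟨⟨_, e2⟩, _⟩
      exact hne (by rw [← e1, ← e2])
    calc (Pr ({ω | D m ω = q} ∩ B)).toReal
        = (Pr (({ω | D m ω = q} ∩ B) ∩ {ω | D (m - 1) ω ∈ Finset.Icc 1 T})).toReal := by
          rw [measure_inter_conull hGc]
      _ = (Pr ((⋃ p' ∈ Finset.Icc 1 T, {ω | D m ω = q ∧ D (m - 1) ω = p'} ∩ B) ∩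
            {ω | D (m - 1) ω ∈ Finset.Icc 1 T})).toReal := by rw [hun]
      _ = (Pr (⋃ p' ∈ Finset.Icc 1 T, {ω | D m ω = q ∧ D (m - 1) ω = p'} ∩ B)).toReal := by
          rw [measure_inter_conull hGc]
      _ = (∑ p' ∈ Finset.Icc 1 T, Pr ({ω | D m ω = q ∧ D (m - 1) ω = p'} ∩ B)).toReal := by
          rw [measure_biUnion_finset hdisj (fun p' _ => hmeasQ p')]
      _ = ∑ p' ∈ Finset.Icc 1 T, (Pr ({ω | D m ω = q ∧ D (m - 1) ω = p'} ∩ B)).toReal :=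
          ENNReal.toReal_sum (fun p' _ => measure_ne_top _ _)
  have hdiffB : ∀ (m v p' : ℕ) (B : Set Ω), MeasurableSet B →
      (Pr ({ω | D m ω = v ∧ D (m - 1) ω = p'} ∩ B)).toReal =
        (Pr ({ω | v ≤ D m ω ∧ D (m - 1) ω = p'} ∩ B)).toReal -
          (Pr ({ω | v + 1 ≤ D m ω ∧ D (m - 1) ω = p'} ∩ B)).toReal := by
    intro m v p' B hB
    have hun : {ω | v ≤ D m ω ∧ D (m - 1) ω = p'} ∩ B =
        ({ω | D m ω = v ∧ D (m - 1) ω = p'} ∩ B) ∪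
          ({ω | v + 1 ≤ D m ω ∧ D (m - 1) ω = p'} ∩ B) := by
      ext ω
      simp only [Set.mem_inter_iff, Set.mem_union, Set.mem_setOf_eq]
      constructor
      · rintro ⟨⟨hle, hp⟩, hBω⟩
        by_cases h : D m ω = v
        · exact Or.inl ⟨⟨h, hp⟩, hBω⟩
        · exact Or.inr ⟨⟨by omega, hp⟩, hBω⟩
      · rintro (⟨⟨he, hp⟩, hBω⟩ | ⟨⟨hle, hp⟩, hBω⟩)
        · exact ⟨⟨by omega, hp⟩, hBω⟩
        · exact ⟨⟨by omega, hp⟩, hBω⟩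
    have hdisj : Disjoint ({ω | D m ω = v ∧ D (m - 1) ω = p'} ∩ B)
        ({ω | v + 1 ≤ D m ω ∧ D (m - 1) ω = p'} ∩ B) := by
      refine Set.disjoint_left.2 ?_
      rintro ω ⟨⟨e1, _⟩, _⟩ ⟨⟨e2, _⟩, _⟩
      omega
    have hmeas2 : MeasurableSet ({ω | v + 1 ≤ D m ω ∧ D (m - 1) ω = p'} ∩ B) :=
      ((hDmeas m (Set.to_countable {x | v + 1 ≤ x}).measurableSet).inter
        (hDmeas (m - 1) (Set.to_countable {x | x = p'}).measurableSet)).inter hB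
    have hadd := measure_union (μ := Pr) hdisj hmeas2
    rw [hun, hadd, ENNReal.toReal_add (measure_ne_top _ _) (measure_ne_top _ _)]
    ring
  have hNsum : ∀ m q, 1 ≤ m → m ≤ K →
      (Pr {ω | D m ω = q}).toReal =
        ∑ p' ∈ Finset.Icc 1 T, (Pr {ω | D m ω = q ∧ D (m - 1) ω = p'}).toReal := by
    intro m q h1 h2
    have h := hsplitB m q Set.univ MeasurableSet.univ h1 h2
    simpa [Set.inter_univ] using h
  have hMudiff : ∀ m v p',
      (Pr {ω | D m ω = v ∧ D (m - 1) ω = p'}).toReal =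
        (Pr {ω | v ≤ D m ω ∧ D (m - 1) ω = p'}).toReal -
          (Pr {ω | v + 1 ≤ D m ω ∧ D (m - 1) ω = p'}).toReal := by
    intro m v p'
    have h := hdiffB m v p' Set.univ MeasurableSet.univ
    simpa [Set.inter_univ] using h
  have hWsum : ∀ m q l s p, 1 ≤ m → m ≤ K →
      (Pr {ω | D m ω = q ∧ s ≤ D l ω ∧ D (l - 1) ω = p}).toReal =
        ∑ p' ∈ Finset.Icc 1 T,
          (Pr {ω | (D m ω = q ∧ D (m - 1) ω = p') ∧ s ≤ D l ω ∧ D (l - 1) ω = p}).toReal :=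
    fun m q l s p h1 h2 =>
      hsplitB m q {ω | s ≤ D l ω ∧ D (l - 1) ω = p} (hmA l s p) h1 h2
  have hWdiff : ∀ m v p' l s p,
      (Pr {ω | (D m ω = v ∧ D (m - 1) ω = p') ∧ s ≤ D l ω ∧ D (l - 1) ω = p}).toReal =
        (Pr {ω | (v ≤ D m ω ∧ D (m - 1) ω = p') ∧ s ≤ D l ω ∧ D (l - 1) ω = p}).toReal -
          (Pr {ω | (v + 1 ≤ D m ω ∧ D (m - 1) ω = p') ∧ s ≤ D l ω ∧ D (l - 1) ω = p}).toReal :=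
    fun m v p' l s p =>
      hdiffB m v p' {ω | s ≤ D l ω ∧ D (l - 1) ω = p} (hmA l s p)
  -- the Markov-property based recursion for cross terms
  have hCθ : ∀ k l t s q p, 2 ≤ k → k ≤ K → l ≤ k - 1 → 1 ≤ t → t ≤ T → 1 ≤ q → q ≤ T →
      (Pr {ω | (t + 1 ≤ D k ω ∧ D (k - 1) ω = q) ∧ s ≤ D l ω ∧ D (l - 1) ω = p}).toReal =
        θ k t q *
          (Pr {ω | (t ≤ D k ω ∧ D (k - 1) ω = q) ∧ s ≤ D l ω ∧ D (l - 1) ω = p}).toReal := by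
    intro k l t s q p hk2 hkK hlk ht1 htT hq1 hqT
    have M1 := DualLPAux.markov_fact Pr K T D0 hD0 D hDmeas hD0as hDrange hMarkov
      k l (t + 1) s q p hk2 hkK hlk
    have M2 := DualLPAux.markov_fact Pr K T D0 hD0 D hDmeas hD0as hDrange hMarkov
      k l t s q p hk2 hkK hlk
    by_cases h0 : (Pr {ω | D (k - 1) ω = q}).toReal = 0
    · have z1 : (Pr {ω | (t + 1 ≤ D k ω ∧ D (k - 1) ω = q) ∧
          s ≤ D l ω ∧ D (l - 1) ω = p}).toReal = 0 :=
        hPzero _ _ (fun ω h => h.1.2) h0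
      have z2 : (Pr {ω | (t ≤ D k ω ∧ D (k - 1) ω = q) ∧
          s ≤ D l ω ∧ D (l - 1) ω = p}).toReal = 0 :=
        hPzero _ _ (fun ω h => h.1.2) h0
      rw [z1, z2, mul_zero]
    · apply mul_right_cancel₀ h0
      rw [M1, hθS k t q (by omega) hkK ht1 htT hq1 hqT, mul_assoc, ← M2]
      ring
  -- w coincides with the survival probabilities
  have hLW : ∀ k, 1 ≤ k → k ≤ K → ∀ t, 1 ≤ t → t ≤ T → ∀ q, 1 ≤ q → q ≤ T →
      w k t q = (Pr {ω | t ≤ D k ω ∧ D (k - 1) ω = q}).toReal := by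
    have Sbase : ∀ q, 1 ≤ q → q ≤ T →
        w 1 1 q = (Pr {ω | 1 ≤ D 1 ω ∧ D 0 ω = q}).toReal := by
      intro q hq1 hqT
      rw [hw1 q (by simp [Finset.mem_Icc]; omega)]
      have hs := hS1 1 q le_rfl hK
      simp only [Nat.sub_self] at hs
      rw [hs]
      by_cases hq : D0 = q
      · have he : {ω | D 0 ω = q} =ᵐ[Pr] (Set.univ : Set Ω) := by
          filter_upwards [hD0as] with ω h
          exact eq_iff_iff.2 ⟨fun _ => trivial, fun _ => h.trans hq⟩
        rw [measure_congr he, measure_univ]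
        simp [hq]
      · have he : {ω | D 0 ω = q} =ᵐ[Pr] (∅ : Set Ω) := by
          filter_upwards [hD0as] with ω h
          exact eq_iff_iff.2 ⟨fun hh => absurd (h.symm.trans hh) hq, fun hh => hh.elim⟩
        rw [measure_congr he, measure_empty]
        simp [hq]
    have SstepT : ∀ k, 1 ≤ k → k ≤ K → ∀ t, 1 ≤ t → t + 1 ≤ T →
        (∀ q, 1 ≤ q → q ≤ T → w k t q = (Pr {ω | t ≤ D k ω ∧ D (k - 1) ω = q}).toReal) →
        ∀ q, 1 ≤ q → q ≤ T →
          w k (t + 1) q = (Pr {ω | t + 1 ≤ D k ω ∧ D (k - 1) ω = q}).toReal := by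
      intro k hk1 hkK t ht1 htT IH q hq1 hqT
      have h2 := hw2 k (by simp [Finset.mem_Icc]; omega) (t + 1) (by simp [Finset.mem_Icc]; omega)
        q (by simp [Finset.mem_Icc]; omega)
      simp only [Nat.add_sub_cancel] at h2
      rw [h2, IH q hq1 hqT, ← hθS k t q hk1 hkK ht1 (by omega) hq1 hqT]
    have SstepK : ∀ k, 1 ≤ k → k + 1 ≤ K →
        (∀ t, 1 ≤ t → t ≤ T → ∀ q, 1 ≤ q → q ≤ T →
          w k t q = (Pr {ω | t ≤ D k ω ∧ D (k - 1) ω = q}).toReal) →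
        ∀ q, 1 ≤ q → q ≤ T →
          w (k + 1) 1 q = (Pr {ω | 1 ≤ D (k + 1) ω ∧ D (k + 1 - 1) ω = q}).toReal := by
      intro k hk1 hkK IH q hq1 hqT
      have h3 := hw3 (k + 1) (by simp [Finset.mem_Icc]; omega) q (by simp [Finset.mem_Icc]; omega)
      have hs := hS1 (k + 1) q (by omega) hkK
      simp only [Nat.add_sub_cancel] at h3 hs ⊢
      rw [h3, hs, hNsum k q hk1 (by omega)]
      refine Finset.sum_congr rfl fun p hp => ?_
      simp only [Finset.mem_Icc] at hp
      rw [IH q hq1 hqT p hp.1 hp.2, hMudiff k q p,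
        hθS k q p hk1 (by omega) hq1 hqT hp.1 hp.2]
      ring
    intro k hk1
    induction k, hk1 using Nat.le_induction with
    | base =>
      intro _ t ht1
      induction t, ht1 using Nat.le_induction with
      | base => exact fun _ q hq1 hqT => Sbase q hq1 hqT
      | succ t ht IHt =>
        intro htT q hq1 hqT
        exact SstepT 1 le_rfl hK t ht htT (fun q h1 h2 => IHt (by omega) q h1 h2) q hq1 hqT
    | succ k hk IHk =>
      intro hkK t ht1
      induction t, ht1 using Nat.le_induction with
      | base =>
        intro _ q hq1 hqT
        exact SstepK k hk hkK (fun t h1 h2 => IHk (by omega) t h1 h2) q hq1 hqT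
      | succ t ht IHt =>
        intro htT q hq1 hqT
        refine SstepT (k + 1) (by omega) hkK t ht htT (fun q h1 h2 => ?_) q hq1 hqT
        exact IHt (by omega) q h1 h2
  -- u vanishes on null events
  have hu0' : ∀ (j : J) k t q, 1 ≤ k → k ≤ K → 1 ≤ t → t ≤ T → 1 ≤ q → q ≤ T →
      (Pr {ω | t ≤ D k ω ∧ D (k - 1) ω = q}).toReal = 0 → u j k t q = 0 := by
    intro j k t q hk1 hkK ht1 htT hq1 hqT h0
    refine le_antisymm ?_ (hu0 j k t q)
    have h5 := hu5 j k (by simp [Finset.mem_Icc]; omega) t (by simp [Finset.mem_Icc]; omega)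
      q (by simp [Finset.mem_Icc]; omega)
    rw [hLW k hk1 hkK t ht1 htT q hq1 hqT, h0, mul_zero] at h5
    exact h5
  have hS11 : ∀ q : ℕ, (Pr {ω | 1 ≤ D 1 ω ∧ D 0 ω = q}).toReal = if D0 = q then (1 : ℝ) else 0 := by
    intro q
    have hs := hS1 1 q le_rfl hK
    simp only [Nat.sub_self] at hs
    rw [hs]
    by_cases hq : D0 = q
    · have he : {ω | D 0 ω = q} =ᵐ[Pr] (Set.univ : Set Ω) := by
        filter_upwards [hD0as] with ω h
        exact eq_iff_iff.2 ⟨fun _ => trivial, fun _ => h.trans hq⟩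
      rw [measure_congr he, measure_univ]
      simp [hq]
    · have he : {ω | D 0 ω = q} =ᵐ[Pr] (∅ : Set Ω) := by
        filter_upwards [hD0as] with ω h
        exact eq_iff_iff.2 ⟨fun hh => absurd (h.symm.trans hh) hq, fun hh => hh.elim⟩
      rw [measure_congr he, measure_empty]
      simp [hq]
  have baseCase : ∀ (i : L) (q : ℕ), 1 ≤ q → q ≤ T →
      (Pr {ω | 1 ≤ D 1 ω ∧ D (1 - 1) ω = q}).toReal * (c i : ℝ) -
        (∑ l ∈ Finset.Icc 1 (1 - 1), ∑ s ∈ Finset.Icc 1 T, ∑ p ∈ Finset.Icc 1 T, ∑ j,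
          (a i j : ℝ) *
            ((Pr {ω | (1 ≤ D 1 ω ∧ D (1 - 1) ω = q) ∧ s ≤ D l ω ∧ D (l - 1) ω = p}).toReal /
              (Pr {ω | s ≤ D l ω ∧ D (l - 1) ω = p}).toReal) * u j l s p) -
        (∑ s ∈ Finset.Icc 1 1, ∑ j,
          (a i j : ℝ) *
            ((Pr {ω | 1 ≤ D 1 ω ∧ s ≤ D 1 ω ∧ D (1 - 1) ω = q}).toReal /
              (Pr {ω | s ≤ D 1 ω ∧ D (1 - 1) ω = q}).toReal) * u j 1 s q) =
      y i 1 1 q := by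
    intro i q hq1 hqT
    simp only [Nat.sub_self]
    have hIcc0 : Finset.Icc 1 0 = (∅ : Finset ℕ) := Finset.Icc_eq_empty (by omega)
    rw [hIcc0, Finset.sum_empty, Finset.Icc_self, Finset.sum_singleton]
    have hseteq : {ω | 1 ≤ D 1 ω ∧ 1 ≤ D 1 ω ∧ D 0 ω = q} = {ω | 1 ≤ D 1 ω ∧ D 0 ω = q} := by
      ext ω
      simp only [Set.mem_setOf_eq]
      tauto
    rw [hseteq]
    have hyu4' := hyu4 i q (by simp [Finset.mem_Icc]; omega)
    by_cases hq : D0 = q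
    · simp only [hS11 q, if_pos hq, div_one, mul_one, one_mul] at hyu4' ⊢
      linarith [hyu4']
    · have h0 : (Pr {ω | 1 ≤ D 1 ω ∧ D 0 ω = q}).toReal = 0 := by
        rw [hS11 q, if_neg hq]
      have hu : ∀ j : J, u j 1 1 q = 0 := fun j => hu0' j 1 1 q le_rfl hK le_rfl hT hq1 hqT h0
      have hsum0 : ∑ j, (a i j : ℝ) * u j 1 1 q = 0 :=
        Finset.sum_eq_zero fun j _ => by rw [hu j, mul_zero]
      rw [hsum0, if_neg hq, zero_mul] at hyu4'
      have hsum1 : ∑ j, (a i j : ℝ) *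
          ((Pr {ω | 1 ≤ D 1 ω ∧ D 0 ω = q}).toReal /
            (Pr {ω | 1 ≤ D 1 ω ∧ D 0 ω = q}).toReal) * u j 1 1 q = 0 :=
        Finset.sum_eq_zero fun j _ => by rw [hu j, mul_zero]
      rw [hsum1, h0, zero_mul]
      linarith [hyu4']
  have stepT : ∀ k, 1 ≤ k → k ≤ K → ∀ t, 1 ≤ t → t + 1 ≤ T →
      (∀ (i : L) (q : ℕ), 1 ≤ q → q ≤ T →
        (Pr {ω | t ≤ D k ω ∧ D (k - 1) ω = q}).toReal * (c i : ℝ) -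
        (∑ l ∈ Finset.Icc 1 (k - 1), ∑ s ∈ Finset.Icc 1 T, ∑ p ∈ Finset.Icc 1 T, ∑ j,
          (a i j : ℝ) *
            ((Pr {ω | (t ≤ D k ω ∧ D (k - 1) ω = q) ∧ s ≤ D l ω ∧ D (l - 1) ω = p}).toReal /
              (Pr {ω | s ≤ D l ω ∧ D (l - 1) ω = p}).toReal) * u j l s p) -
        (∑ s ∈ Finset.Icc 1 t, ∑ j,
          (a i j : ℝ) *
            ((Pr {ω | t ≤ D k ω ∧ s ≤ D k ω ∧ D (k - 1) ω = q}).toReal /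
              (Pr {ω | s ≤ D k ω ∧ D (k - 1) ω = q}).toReal) * u j k s q) =
      y i k t q) →
      ∀ (i : L) (q : ℕ), 1 ≤ q → q ≤ T →
        (Pr {ω | t + 1 ≤ D k ω ∧ D (k - 1) ω = q}).toReal * (c i : ℝ) -
        (∑ l ∈ Finset.Icc 1 (k - 1), ∑ s ∈ Finset.Icc 1 T, ∑ p ∈ Finset.Icc 1 T, ∑ j,
          (a i j : ℝ) *
            ((Pr {ω | (t + 1 ≤ D k ω ∧ D (k - 1) ω = q) ∧ s ≤ D l ω ∧ D (l - 1) ω = p}).toReal /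
              (Pr {ω | s ≤ D l ω ∧ D (l - 1) ω = p}).toReal) * u j l s p) -
        (∑ s ∈ Finset.Icc 1 (t + 1), ∑ j,
          (a i j : ℝ) *
            ((Pr {ω | t + 1 ≤ D k ω ∧ s ≤ D k ω ∧ D (k - 1) ω = q}).toReal /
              (Pr {ω | s ≤ D k ω ∧ D (k - 1) ω = q}).toReal) * u j k s q) =
      y i k (t + 1) q := by
    intro k hk1 hkK t ht1 htT IH i q hq1 hqT
    have e1 : (Pr {ω | t + 1 ≤ D k ω ∧ D (k - 1) ω = q}).toReal =
        θ k t q * (Pr {ω | t ≤ D k ω ∧ D (k - 1) ω = q}).toReal :=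
      hθS k t q hk1 hkK ht1 (by omega) hq1 hqT
    have e2 : (∑ l ∈ Finset.Icc 1 (k - 1), ∑ s ∈ Finset.Icc 1 T, ∑ p ∈ Finset.Icc 1 T, ∑ j,
          (a i j : ℝ) *
            ((Pr {ω | (t + 1 ≤ D k ω ∧ D (k - 1) ω = q) ∧ s ≤ D l ω ∧ D (l - 1) ω = p}).toReal /
              (Pr {ω | s ≤ D l ω ∧ D (l - 1) ω = p}).toReal) * u j l s p) =
        θ k t q * (∑ l ∈ Finset.Icc 1 (k - 1), ∑ s ∈ Finset.Icc 1 T, ∑ p ∈ Finset.Icc 1 T, ∑ j,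
          (a i j : ℝ) *
            ((Pr {ω | (t ≤ D k ω ∧ D (k - 1) ω = q) ∧ s ≤ D l ω ∧ D (l - 1) ω = p}).toReal /
              (Pr {ω | s ≤ D l ω ∧ D (l - 1) ω = p}).toReal) * u j l s p) := by
      rw [Finset.mul_sum]
      refine Finset.sum_congr rfl fun l hl => ?_
      rw [Finset.mul_sum]
      refine Finset.sum_congr rfl fun s _ => ?_
      rw [Finset.mul_sum]
      refine Finset.sum_congr rfl fun p _ => ?_
      rw [Finset.mul_sum]
      refine Finset.sum_congr rfl fun j _ => ?_
      simp only [Finset.mem_Icc] at hl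
      rw [hCθ k l t s q p (by omega) hkK (by omega) ht1 (by omega) hq1 hqT]
      ring
    have e3 : (∑ s ∈ Finset.Icc 1 (t + 1), ∑ j,
          (a i j : ℝ) *
            ((Pr {ω | t + 1 ≤ D k ω ∧ s ≤ D k ω ∧ D (k - 1) ω = q}).toReal /
              (Pr {ω | s ≤ D k ω ∧ D (k - 1) ω = q}).toReal) * u j k s q) =
        θ k t q * (∑ s ∈ Finset.Icc 1 t, ∑ j,
          (a i j : ℝ) *
            ((Pr {ω | t ≤ D k ω ∧ s ≤ D k ω ∧ D (k - 1) ω = q}).toReal /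
              (Pr {ω | s ≤ D k ω ∧ D (k - 1) ω = q}).toReal) * u j k s q)
          + ∑ j, (a i j : ℝ) * u j k (t + 1) q := by
      rw [Finset.sum_Icc_succ_top (by omega : 1 ≤ t + 1)]
      have eold : (∑ s ∈ Finset.Icc 1 t, ∑ j,
            (a i j : ℝ) *
              ((Pr {ω | t + 1 ≤ D k ω ∧ s ≤ D k ω ∧ D (k - 1) ω = q}).toReal /
                (Pr {ω | s ≤ D k ω ∧ D (k - 1) ω = q}).toReal) * u j k s q) =
          θ k t q * (∑ s ∈ Finset.Icc 1 t, ∑ j,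
            (a i j : ℝ) *
              ((Pr {ω | t ≤ D k ω ∧ s ≤ D k ω ∧ D (k - 1) ω = q}).toReal /
                (Pr {ω | s ≤ D k ω ∧ D (k - 1) ω = q}).toReal) * u j k s q) := by
        rw [Finset.mul_sum]
        refine Finset.sum_congr rfl fun s hs => ?_
        rw [Finset.mul_sum]
        refine Finset.sum_congr rfl fun j _ => ?_
        simp only [Finset.mem_Icc] at hs
        have hn1 : {ω | t + 1 ≤ D k ω ∧ s ≤ D k ω ∧ D (k - 1) ω = q} =
            {ω | t + 1 ≤ D k ω ∧ D (k - 1) ω = q} := by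
          ext ω
          simp only [Set.mem_setOf_eq]
          constructor
          · rintro ⟨h1, _, h3⟩
            exact ⟨h1, h3⟩
          · rintro ⟨h1, h3⟩
            exact ⟨h1, by omega, h3⟩
        have hn2 : {ω | t ≤ D k ω ∧ s ≤ D k ω ∧ D (k - 1) ω = q} =
            {ω | t ≤ D k ω ∧ D (k - 1) ω = q} := by
          ext ω
          simp only [Set.mem_setOf_eq]
          constructor
          · rintro ⟨h1, _, h3⟩
            exact ⟨h1, h3⟩
          · rintro ⟨h1, h3⟩
            exact ⟨h1, by omega, h3⟩
        rw [hn1, hn2, e1]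
        ring
      have enew : (∑ j, (a i j : ℝ) *
            ((Pr {ω | t + 1 ≤ D k ω ∧ t + 1 ≤ D k ω ∧ D (k - 1) ω = q}).toReal /
              (Pr {ω | t + 1 ≤ D k ω ∧ D (k - 1) ω = q}).toReal) * u j k (t + 1) q) =
          ∑ j, (a i j : ℝ) * u j k (t + 1) q := by
        have hn : {ω | t + 1 ≤ D k ω ∧ t + 1 ≤ D k ω ∧ D (k - 1) ω = q} =
            {ω | t + 1 ≤ D k ω ∧ D (k - 1) ω = q} := by
          ext ω
          simp only [Set.mem_setOf_eq]
          tauto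
        rw [hn]
        by_cases h0 : (Pr {ω | t + 1 ≤ D k ω ∧ D (k - 1) ω = q}).toReal = 0
        · have hu := fun j => hu0' j k (t + 1) q hk1 hkK (by omega) (by omega) hq1 hqT h0
          refine Finset.sum_congr rfl fun j _ => ?_
          rw [hu j, mul_zero, mul_zero]
        · refine Finset.sum_congr rfl fun j _ => ?_
          rw [div_self h0, mul_one]
      rw [eold, enew]
    have e4 := IH i q hq1 hqT
    have e5 := hyu2 i k (by simp [Finset.mem_Icc]; omega) (t + 1) (by simp [Finset.mem_Icc]; omega)
      q (by simp [Finset.mem_Icc]; omega)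
    simp only [Nat.add_sub_cancel] at e5
    linear_combination (c i : ℝ) * e1 - e2 - e3 + θ k t q * e4 - e5
  have stepK : ∀ k, 1 ≤ k → k + 1 ≤ K →
      (∀ t, 1 ≤ t → t ≤ T → ∀ (i : L) (q : ℕ), 1 ≤ q → q ≤ T →
        (Pr {ω | t ≤ D k ω ∧ D (k - 1) ω = q}).toReal * (c i : ℝ) -
        (∑ l ∈ Finset.Icc 1 (k - 1), ∑ s ∈ Finset.Icc 1 T, ∑ p ∈ Finset.Icc 1 T, ∑ j,
          (a i j : ℝ) *
            ((Pr {ω | (t ≤ D k ω ∧ D (k - 1) ω = q) ∧ s ≤ D l ω ∧ D (l - 1) ω = p}).toReal /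
              (Pr {ω | s ≤ D l ω ∧ D (l - 1) ω = p}).toReal) * u j l s p) -
        (∑ s ∈ Finset.Icc 1 t, ∑ j,
          (a i j : ℝ) *
            ((Pr {ω | t ≤ D k ω ∧ s ≤ D k ω ∧ D (k - 1) ω = q}).toReal /
              (Pr {ω | s ≤ D k ω ∧ D (k - 1) ω = q}).toReal) * u j k s q) =
      y i k t q) →
      ∀ (i : L) (q : ℕ), 1 ≤ q → q ≤ T →
        (Pr {ω | 1 ≤ D (k + 1) ω ∧ D ((k + 1) - 1) ω = q}).toReal * (c i : ℝ) -
        (∑ l ∈ Finset.Icc 1 ((k + 1) - 1), ∑ s ∈ Finset.Icc 1 T, ∑ p ∈ Finset.Icc 1 T, ∑ j,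
          (a i j : ℝ) *
            ((Pr {ω | (1 ≤ D (k + 1) ω ∧ D ((k + 1) - 1) ω = q) ∧ s ≤ D l ω ∧ D (l - 1) ω = p}).toReal /
              (Pr {ω | s ≤ D l ω ∧ D (l - 1) ω = p}).toReal) * u j l s p) -
        (∑ s ∈ Finset.Icc 1 1, ∑ j,
          (a i j : ℝ) *
            ((Pr {ω | 1 ≤ D (k + 1) ω ∧ s ≤ D (k + 1) ω ∧ D ((k + 1) - 1) ω = q}).toReal /
              (Pr {ω | s ≤ D (k + 1) ω ∧ D ((k + 1) - 1) ω = q}).toReal) * u j (k + 1) s q) =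
      y i (k + 1) 1 q := by
    intro k hk1 hkK IH i q hq1 hqT
    simp only [Nat.add_sub_cancel]
    have e1 : (Pr {ω | 1 ≤ D (k + 1) ω ∧ D k ω = q}).toReal =
        ∑ p' ∈ Finset.Icc 1 T,
          (1 - θ k q p') * (Pr {ω | q ≤ D k ω ∧ D (k - 1) ω = p'}).toReal := by
      have hs := hS1 (k + 1) q (by omega) hkK
      simp only [Nat.add_sub_cancel] at hs
      rw [hs, hNsum k q hk1 (by omega)]
      refine Finset.sum_congr rfl fun p' hp' => ?_
      simp only [Finset.mem_Icc] at hp'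
      rw [hMudiff k q p', hθS k q p' hk1 (by omega) hq1 hqT hp'.1 hp'.2]
      ring
    have e2 : (∑ l ∈ Finset.Icc 1 k, ∑ s ∈ Finset.Icc 1 T, ∑ p ∈ Finset.Icc 1 T, ∑ j,
          (a i j : ℝ) *
            ((Pr {ω | (1 ≤ D (k + 1) ω ∧ D k ω = q) ∧ s ≤ D l ω ∧ D (l - 1) ω = p}).toReal /
              (Pr {ω | s ≤ D l ω ∧ D (l - 1) ω = p}).toReal) * u j l s p) =
        (∑ l ∈ Finset.Icc 1 (k - 1), ∑ s ∈ Finset.Icc 1 T, ∑ p ∈ Finset.Icc 1 T, ∑ j,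
          (a i j : ℝ) *
            ((Pr {ω | (1 ≤ D (k + 1) ω ∧ D k ω = q) ∧ s ≤ D l ω ∧ D (l - 1) ω = p}).toReal /
              (Pr {ω | s ≤ D l ω ∧ D (l - 1) ω = p}).toReal) * u j l s p)
          + (∑ s ∈ Finset.Icc 1 T, ∑ p ∈ Finset.Icc 1 T, ∑ j,
          (a i j : ℝ) *
            ((Pr {ω | (1 ≤ D (k + 1) ω ∧ D k ω = q) ∧ s ≤ D k ω ∧ D (k - 1) ω = p}).toReal /
              (Pr {ω | s ≤ D k ω ∧ D (k - 1) ω = p}).toReal) * u j k s p) := by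
      obtain ⟨b, rfl⟩ : ∃ b, k = b + 1 := ⟨k - 1, by omega⟩
      rw [Finset.sum_Icc_succ_top (by omega)]
      simp only [Nat.add_sub_cancel]
    have hnum : ∀ l, 1 ≤ l → l ≤ k - 1 → ∀ s p,
        (Pr {ω | (1 ≤ D (k + 1) ω ∧ D k ω = q) ∧ s ≤ D l ω ∧ D (l - 1) ω = p}).toReal =
          ∑ p' ∈ Finset.Icc 1 T, (1 - θ k q p') *
            (Pr {ω | (q ≤ D k ω ∧ D (k - 1) ω = p') ∧ s ≤ D l ω ∧ D (l - 1) ω = p}).toReal := by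
      intro l hl1 hlk s p
      have h1 := hC1 (k + 1) q l s p (by omega) hkK
      simp only [Nat.add_sub_cancel] at h1
      rw [h1, hWsum k q l s p hk1 (by omega)]
      refine Finset.sum_congr rfl fun p' hp' => ?_
      simp only [Finset.mem_Icc] at hp'
      rw [hWdiff k q p' l s p, hCθ k l q s p' p (by omega) (by omega) hlk hq1 hqT hp'.1 hp'.2]
      ring
    have e3 : (∑ l ∈ Finset.Icc 1 (k - 1), ∑ s ∈ Finset.Icc 1 T, ∑ p ∈ Finset.Icc 1 T, ∑ j,
          (a i j : ℝ) *
            ((Pr {ω | (1 ≤ D (k + 1) ω ∧ D k ω = q) ∧ s ≤ D l ω ∧ D (l - 1) ω = p}).toReal /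
              (Pr {ω | s ≤ D l ω ∧ D (l - 1) ω = p}).toReal) * u j l s p) =
        ∑ p' ∈ Finset.Icc 1 T, (1 - θ k q p') *
          (∑ l ∈ Finset.Icc 1 (k - 1), ∑ s ∈ Finset.Icc 1 T, ∑ p ∈ Finset.Icc 1 T, ∑ j,
            (a i j : ℝ) *
              ((Pr {ω | (q ≤ D k ω ∧ D (k - 1) ω = p') ∧ s ≤ D l ω ∧ D (l - 1) ω = p}).toReal /
                (Pr {ω | s ≤ D l ω ∧ D (l - 1) ω = p}).toReal) * u j l s p) := by
      calc (∑ l ∈ Finset.Icc 1 (k - 1), ∑ s ∈ Finset.Icc 1 T, ∑ p ∈ Finset.Icc 1 T, ∑ j,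
            (a i j : ℝ) *
              ((Pr {ω | (1 ≤ D (k + 1) ω ∧ D k ω = q) ∧ s ≤ D l ω ∧ D (l - 1) ω = p}).toReal /
                (Pr {ω | s ≤ D l ω ∧ D (l - 1) ω = p}).toReal) * u j l s p)
          = ∑ l ∈ Finset.Icc 1 (k - 1), ∑ s ∈ Finset.Icc 1 T, ∑ p ∈ Finset.Icc 1 T, ∑ j,
              ∑ p' ∈ Finset.Icc 1 T, (1 - θ k q p') *
                ((a i j : ℝ) *
                  ((Pr {ω | (q ≤ D k ω ∧ D (k - 1) ω = p') ∧ s ≤ D l ω ∧ D (l - 1) ω = p}).toReal /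
                    (Pr {ω | s ≤ D l ω ∧ D (l - 1) ω = p}).toReal) * u j l s p) := by
            refine Finset.sum_congr rfl fun l hl => Finset.sum_congr rfl fun s _ =>
              Finset.sum_congr rfl fun p _ => Finset.sum_congr rfl fun j _ => ?_
            simp only [Finset.mem_Icc] at hl
            rw [hnum l hl.1 hl.2 s p, Finset.sum_div, Finset.mul_sum, Finset.sum_mul]
            refine Finset.sum_congr rfl fun p' _ => ?_
            ring
        _ = ∑ l ∈ Finset.Icc 1 (k - 1), ∑ s ∈ Finset.Icc 1 T, ∑ p ∈ Finset.Icc 1 T,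
              ∑ p' ∈ Finset.Icc 1 T, ∑ j, (1 - θ k q p') *
                ((a i j : ℝ) *
                  ((Pr {ω | (q ≤ D k ω ∧ D (k - 1) ω = p') ∧ s ≤ D l ω ∧ D (l - 1) ω = p}).toReal /
                    (Pr {ω | s ≤ D l ω ∧ D (l - 1) ω = p}).toReal) * u j l s p) := by
            refine Finset.sum_congr rfl fun l _ => Finset.sum_congr rfl fun s _ =>
              Finset.sum_congr rfl fun p _ => Finset.sum_comm
        _ = ∑ l ∈ Finset.Icc 1 (k - 1), ∑ s ∈ Finset.Icc 1 T, ∑ p' ∈ Finset.Icc 1 T,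
              ∑ p ∈ Finset.Icc 1 T, ∑ j, (1 - θ k q p') *
                ((a i j : ℝ) *
                  ((Pr {ω | (q ≤ D k ω ∧ D (k - 1) ω = p') ∧ s ≤ D l ω ∧ D (l - 1) ω = p}).toReal /
                    (Pr {ω | s ≤ D l ω ∧ D (l - 1) ω = p}).toReal) * u j l s p) := by
            refine Finset.sum_congr rfl fun l _ => Finset.sum_congr rfl fun s _ => Finset.sum_comm
        _ = ∑ l ∈ Finset.Icc 1 (k - 1), ∑ p' ∈ Finset.Icc 1 T, ∑ s ∈ Finset.Icc 1 T,
              ∑ p ∈ Finset.Icc 1 T, ∑ j, (1 - θ k q p') *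
                ((a i j : ℝ) *
                  ((Pr {ω | (q ≤ D k ω ∧ D (k - 1) ω = p') ∧ s ≤ D l ω ∧ D (l - 1) ω = p}).toReal /
                    (Pr {ω | s ≤ D l ω ∧ D (l - 1) ω = p}).toReal) * u j l s p) := by
            refine Finset.sum_congr rfl fun l _ => Finset.sum_comm
        _ = ∑ p' ∈ Finset.Icc 1 T, ∑ l ∈ Finset.Icc 1 (k - 1), ∑ s ∈ Finset.Icc 1 T,
              ∑ p ∈ Finset.Icc 1 T, ∑ j, (1 - θ k q p') *
                ((a i j : ℝ) *
                  ((Pr {ω | (q ≤ D k ω ∧ D (k - 1) ω = p') ∧ s ≤ D l ω ∧ D (l - 1) ω = p}).toReal /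
                    (Pr {ω | s ≤ D l ω ∧ D (l - 1) ω = p}).toReal) * u j l s p) := Finset.sum_comm
        _ = ∑ p' ∈ Finset.Icc 1 T, (1 - θ k q p') *
              (∑ l ∈ Finset.Icc 1 (k - 1), ∑ s ∈ Finset.Icc 1 T, ∑ p ∈ Finset.Icc 1 T, ∑ j,
                (a i j : ℝ) *
                  ((Pr {ω | (q ≤ D k ω ∧ D (k - 1) ω = p') ∧ s ≤ D l ω ∧ D (l - 1) ω = p}).toReal /
                    (Pr {ω | s ≤ D l ω ∧ D (l - 1) ω = p}).toReal) * u j l s p) := by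
            refine Finset.sum_congr rfl fun p' _ => ?_
            rw [Finset.mul_sum]
            refine Finset.sum_congr rfl fun l _ => ?_
            rw [Finset.mul_sum]
            refine Finset.sum_congr rfl fun s _ => ?_
            rw [Finset.mul_sum]
            refine Finset.sum_congr rfl fun p _ => ?_
            rw [Finset.mul_sum]
    have hCk : ∀ s p', 1 ≤ p' → p' ≤ T →
        (Pr {ω | (1 ≤ D (k + 1) ω ∧ D k ω = q) ∧ s ≤ D k ω ∧ D (k - 1) ω = p'}).toReal =
          if s ≤ q then
            (1 - θ k q p') * (Pr {ω | q ≤ D k ω ∧ D (k - 1) ω = p'}).toReal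
          else 0 := by
      intro s p' hp1 hp2
      have h1 := hC1 (k + 1) q k s p' (by omega) hkK
      simp only [Nat.add_sub_cancel] at h1
      rw [h1]
      by_cases hsq : s ≤ q
      · rw [if_pos hsq]
        have hset : {ω | D k ω = q ∧ s ≤ D k ω ∧ D (k - 1) ω = p'} =
            {ω | D k ω = q ∧ D (k - 1) ω = p'} := by
          ext ω
          simp only [Set.mem_setOf_eq]
          constructor
          · rintro ⟨h1, _, h3⟩
            exact ⟨h1, h3⟩
          · rintro ⟨h1, h3⟩
            exact ⟨h1, by omega, h3⟩
        rw [hset, hMudiff k q p', hθS k q p' hk1 (by omega) hq1 hqT hp1 hp2]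
        ring
      · rw [if_neg hsq]
        have hset : {ω | D k ω = q ∧ s ≤ D k ω ∧ D (k - 1) ω = p'} = (∅ : Set Ω) := by
          ext ω
          simp only [Set.mem_setOf_eq, Set.mem_empty_iff_false, iff_false, not_and]
          intro h1 h2
          omega
        rw [hset]
        simp
    have e4 : (∑ s ∈ Finset.Icc 1 T, ∑ p ∈ Finset.Icc 1 T, ∑ j,
          (a i j : ℝ) *
            ((Pr {ω | (1 ≤ D (k + 1) ω ∧ D k ω = q) ∧ s ≤ D k ω ∧ D (k - 1) ω = p}).toReal /
              (Pr {ω | s ≤ D k ω ∧ D (k - 1) ω = p}).toReal) * u j k s p) =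
        ∑ p' ∈ Finset.Icc 1 T, (1 - θ k q p') *
          (∑ s ∈ Finset.Icc 1 q, ∑ j,
            (a i j : ℝ) *
              ((Pr {ω | q ≤ D k ω ∧ s ≤ D k ω ∧ D (k - 1) ω = p'}).toReal /
                (Pr {ω | s ≤ D k ω ∧ D (k - 1) ω = p'}).toReal) * u j k s p') := by
      calc (∑ s ∈ Finset.Icc 1 T, ∑ p ∈ Finset.Icc 1 T, ∑ j,
            (a i j : ℝ) *
              ((Pr {ω | (1 ≤ D (k + 1) ω ∧ D k ω = q) ∧ s ≤ D k ω ∧ D (k - 1) ω = p}).toReal /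
                (Pr {ω | s ≤ D k ω ∧ D (k - 1) ω = p}).toReal) * u j k s p)
          = ∑ s ∈ Finset.Icc 1 T, ∑ p' ∈ Finset.Icc 1 T,
              (if s ≤ q then (1 - θ k q p') * (∑ j,
                (a i j : ℝ) *
                  ((Pr {ω | q ≤ D k ω ∧ D (k - 1) ω = p'}).toReal /
                    (Pr {ω | s ≤ D k ω ∧ D (k - 1) ω = p'}).toReal) * u j k s p')
              else 0) := by
            refine Finset.sum_congr rfl fun s _ => Finset.sum_congr rfl fun p' hp' => ?_
            simp only [Finset.mem_Icc] at hp'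
            by_cases hsq : s ≤ q
            · rw [if_pos hsq, Finset.mul_sum]
              refine Finset.sum_congr rfl fun j _ => ?_
              rw [hCk s p' hp'.1 hp'.2, if_pos hsq]
              ring
            · rw [if_neg hsq]
              refine Finset.sum_eq_zero fun j _ => ?_
              rw [hCk s p' hp'.1 hp'.2, if_neg hsq]
              rw [zero_div, mul_zero, zero_mul]
        _ = ∑ p' ∈ Finset.Icc 1 T, ∑ s ∈ Finset.Icc 1 T,
              (if s ≤ q then (1 - θ k q p') * (∑ j,
                (a i j : ℝ) *
                  ((Pr {ω | q ≤ D k ω ∧ D (k - 1) ω = p'}).toReal /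
                    (Pr {ω | s ≤ D k ω ∧ D (k - 1) ω = p'}).toReal) * u j k s p')
              else 0) := Finset.sum_comm
        _ = ∑ p' ∈ Finset.Icc 1 T, (1 - θ k q p') *
              (∑ s ∈ Finset.Icc 1 q, ∑ j,
                (a i j : ℝ) *
                  ((Pr {ω | q ≤ D k ω ∧ s ≤ D k ω ∧ D (k - 1) ω = p'}).toReal /
                    (Pr {ω | s ≤ D k ω ∧ D (k - 1) ω = p'}).toReal) * u j k s p') := by
            refine Finset.sum_congr rfl fun p' _ => ?_
            have hfil : (Finset.Icc 1 T).filter (fun s => s ≤ q) = Finset.Icc 1 q := by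
              ext s
              simp only [Finset.mem_filter, Finset.mem_Icc]
              omega
            rw [← Finset.sum_filter, hfil, Finset.mul_sum]
            refine Finset.sum_congr rfl fun s hs => ?_
            simp only [Finset.mem_Icc] at hs
            have hset2 : {ω | q ≤ D k ω ∧ s ≤ D k ω ∧ D (k - 1) ω = p'} =
                {ω | q ≤ D k ω ∧ D (k - 1) ω = p'} := by
              ext ω
              simp only [Set.mem_setOf_eq]
              constructor
              · rintro ⟨h1, _, h3⟩
                exact ⟨h1, h3⟩
              · rintro ⟨h1, h3⟩
                exact ⟨h1, by omega, h3⟩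
            rw [hset2]
    have e5 : (∑ s ∈ Finset.Icc 1 1, ∑ j,
          (a i j : ℝ) *
            ((Pr {ω | 1 ≤ D (k + 1) ω ∧ s ≤ D (k + 1) ω ∧ D k ω = q}).toReal /
              (Pr {ω | s ≤ D (k + 1) ω ∧ D k ω = q}).toReal) * u j (k + 1) s q) =
        ∑ j, (a i j : ℝ) * u j (k + 1) 1 q := by
      rw [Finset.Icc_self, Finset.sum_singleton]
      have hset : {ω | 1 ≤ D (k + 1) ω ∧ 1 ≤ D (k + 1) ω ∧ D k ω = q} =
          {ω | 1 ≤ D (k + 1) ω ∧ D k ω = q} := by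
        ext ω
        simp only [Set.mem_setOf_eq]
        tauto
      rw [hset]
      by_cases h0 : (Pr {ω | 1 ≤ D (k + 1) ω ∧ D k ω = q}).toReal = 0
      · have hu : ∀ j : J, u j (k + 1) 1 q = 0 := fun j =>
          hu0' j (k + 1) 1 q (by omega) hkK le_rfl hT hq1 hqT h0
        refine Finset.sum_congr rfl fun j _ => ?_
        rw [hu j, mul_zero, mul_zero]
      · refine Finset.sum_congr rfl fun j _ => ?_
        rw [div_self h0, mul_one]
    have e6 : (∑ p' ∈ Finset.Icc 1 T,
          (1 - θ k q p') * (Pr {ω | q ≤ D k ω ∧ D (k - 1) ω = p'}).toReal * (c i : ℝ)) =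
        (∑ p' ∈ Finset.Icc 1 T, (1 - θ k q p') *
          (∑ l ∈ Finset.Icc 1 (k - 1), ∑ s ∈ Finset.Icc 1 T, ∑ p ∈ Finset.Icc 1 T, ∑ j,
            (a i j : ℝ) *
              ((Pr {ω | (q ≤ D k ω ∧ D (k - 1) ω = p') ∧ s ≤ D l ω ∧ D (l - 1) ω = p}).toReal /
                (Pr {ω | s ≤ D l ω ∧ D (l - 1) ω = p}).toReal) * u j l s p))
        + (∑ p' ∈ Finset.Icc 1 T, (1 - θ k q p') *
          (∑ s ∈ Finset.Icc 1 q, ∑ j,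
            (a i j : ℝ) *
              ((Pr {ω | q ≤ D k ω ∧ s ≤ D k ω ∧ D (k - 1) ω = p'}).toReal /
                (Pr {ω | s ≤ D k ω ∧ D (k - 1) ω = p'}).toReal) * u j k s p'))
        + ∑ p' ∈ Finset.Icc 1 T, (1 - θ k q p') * y i k q p' := by
      rw [← Finset.sum_add_distrib, ← Finset.sum_add_distrib]
      refine Finset.sum_congr rfl fun p' hp' => ?_
      simp only [Finset.mem_Icc] at hp'
      have hIH := IH q hq1 hqT i p' hp'.1 hp'.2
      linear_combination (1 - θ k q p') * hIH
    have Ec : (∑ p' ∈ Finset.Icc 1 T,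
          (1 - θ k q p') * (Pr {ω | q ≤ D k ω ∧ D (k - 1) ω = p'}).toReal) * (c i : ℝ) =
        ∑ p' ∈ Finset.Icc 1 T,
          (1 - θ k q p') * (Pr {ω | q ≤ D k ω ∧ D (k - 1) ω = p'}).toReal * (c i : ℝ) :=
      Finset.sum_mul _ _ _
    have e7 := hyu3 i (k + 1) (by simp [Finset.mem_Icc]; omega) q (by simp [Finset.mem_Icc]; omega)
    simp only [Nat.add_sub_cancel] at e7
    rw [e2]
    linear_combination (c i : ℝ) * e1 + Ec + e6 - e3 - e4 - e5 - e7
  have main : ∀ k, 1 ≤ k → k ≤ K → ∀ t, 1 ≤ t → t ≤ T → ∀ (i : L) (q : ℕ), 1 ≤ q → q ≤ T →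
      (Pr {ω | t ≤ D k ω ∧ D (k - 1) ω = q}).toReal * (c i : ℝ) -
        (∑ l ∈ Finset.Icc 1 (k - 1), ∑ s ∈ Finset.Icc 1 T, ∑ p ∈ Finset.Icc 1 T, ∑ j,
          (a i j : ℝ) *
            ((Pr {ω | (t ≤ D k ω ∧ D (k - 1) ω = q) ∧ s ≤ D l ω ∧ D (l - 1) ω = p}).toReal /
              (Pr {ω | s ≤ D l ω ∧ D (l - 1) ω = p}).toReal) * u j l s p) -
        (∑ s ∈ Finset.Icc 1 t, ∑ j,
          (a i j : ℝ) *
            ((Pr {ω | t ≤ D k ω ∧ s ≤ D k ω ∧ D (k - 1) ω = q}).toReal /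
              (Pr {ω | s ≤ D k ω ∧ D (k - 1) ω = q}).toReal) * u j k s q) =
      y i k t q := by
    intro k hk1
    induction k, hk1 using Nat.le_induction with
    | base =>
      intro _ t ht1
      induction t, ht1 using Nat.le_induction with
      | base => exact fun _ i q hq1 hqT => baseCase i q hq1 hqT
      | succ t ht IHt =>
        intro htT i q hq1 hqT
        exact stepT 1 le_rfl hK t ht htT (fun i q h1 h2 => IHt (by omega) i q h1 h2) i q hq1 hqT
    | succ k hk IHk =>
      intro hkK t ht1
      induction t, ht1 using Nat.le_induction with
      | base =>
        intro _ i q hq1 hqT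
        exact stepK k hk hkK (fun t h1 h2 => IHk (by omega) t h1 h2) i q hq1 hqT
      | succ t ht IHt =>
        intro htT i q hq1 hqT
        refine stepT (k + 1) (by omega) hkK t ht htT (fun i q h1 h2 => ?_) i q hq1 hqT
        exact IHt (by omega) i q h1 h2
  intro i k hk t ht q hq
  simp only [Finset.mem_Icc] at hk ht hq
  exact main k hk.1 hk.2 t ht.1 ht.2 i q hq.1 hq.2
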